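/- Let D = (V, A) be a finite digraph in which every vertex has out-degree at least one and in-degree at least one, let B be its adjacency matrix over the natural numbers, and for W ⊆ V let Ī_W be the V × V diagonal matrix with diagonal entry 0 at each vertex of W and 1 elsewhere. For any finite sequence W_1, ..., W_l of subsets of V, the following three statements are equivalent: (1) Ī_{W_1} B Ī_{W_2} ⋯ B Ī_{W_l} = 0; (2) B Ī_{W_1} B Ī_{W_2} ⋯ B Ī_{W_l} = 0; (3) Ī_{W_1} B Ī_{W_2} ⋯ B Ī_{W_l} B = 0. -/
import Mathlib


open scoped Classical

/-- The adjacency matrix over `ℕ` of the digraph with arc relation `A`. -/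
noncomputable def adjMat {V : Type} [Fintype V] (A : V → V → Prop) : Matrix V V ℕ :=
  fun u w => if A u w then 1 else 0

/-- The diagonal matrix `Ī_W`, with diagonal entry `0` at vertices of `W` and `1`
elsewhere. -/
noncomputable def diagCompl {V : Type} [Fintype V] [DecidableEq V] (W : Finset V) :
    Matrix V V ℕ :=
  Matrix.diagonal (fun v => if v ∈ W then 0 else 1)

/-- The product `Ī_{W_1} B Ī_{W_2} ⋯ B Ī_{W_{l+1}}` (0-indexed: `prodMat A W l`
uses the cop sets `W 0, ..., W l`). -/
noncomputable def prodMat {V : Type} [Fintype V] [DecidableEq V]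
    (A : V → V → Prop) (W : ℕ → Finset V) : ℕ → Matrix V V ℕ
  | 0 => diagCompl (W 0)
  | i + 1 => prodMat A W i * adjMat A * diagCompl (W (i + 1))

/-- If every vertex has out-degree at least one and in-degree at least one, then for
any finite sequence of cop sets `W_1, ..., W_l` (here `W 0, ..., W l`), the vanishing
of `Ī_{W_1} B ⋯ B Ī_{W_l}`, of `B Ī_{W_1} B ⋯ B Ī_{W_l}`, and of
`Ī_{W_1} B ⋯ B Ī_{W_l} B` are equivalent. -/
theorem prodMat_zero_iff_of_min_degrees {V : Type} [Fintype V] [DecidableEq V]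
    (A : V → V → Prop)
    (hout : ∀ v : V, ∃ u, A v u) (hin : ∀ v : V, ∃ u, A u v)
    (W : ℕ → Finset V) (l : ℕ) :
    (adjMat A * prodMat A W l = 0 ↔ prodMat A W l = 0) ∧
    (prodMat A W l * adjMat A = 0 ↔ prodMat A W l = 0) := by
  set M := prodMat A W l
  constructor
  · constructor
    · intro h
      ext v w
      obtain ⟨u, hu⟩ := hin v
      have h0 : (adjMat A * M) u w = 0 := by rw [h]; rfl
      rw [Matrix.mul_apply] at h0
      have := (Finset.sum_eq_zero_iff.mp h0) v (Finset.mem_univ v)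
      simpa [adjMat, hu] using this
    · intro h; rw [h, Matrix.mul_zero]
  · constructor
    · intro h
      ext v w
      obtain ⟨u, hu⟩ := hout w
      have h0 : (M * adjMat A) v u = 0 := by rw [h]; rfl
      rw [Matrix.mul_apply] at h0
      have := (Finset.sum_eq_zero_iff.mp h0) w (Finset.mem_univ w)
      simpa [adjMat, hu] using this
    · intro h; rw [h, Matrix.zero_mul]
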